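/- arXiv:1711.05508 — 4 statements merged into one kernel-verified Lean document; each statement's English description precedes it below -/
import Mathlib

section
/- Let ⟨K,B,P,N⟩_R be a DPI, D a set of minimal diagnoses w.r.t. it, and dx a set with ∅ ⊂ dx ⊂ D. Then (K \ U_dx) ∩ Disc_D = U_D \ U_dx, i.e., the canonical query w.r.t. the seed dx (when defined) equals U_D \ U_dx, which in turn equals the union of the traits D_i \ U_dx over all D_i ∈ D \ dx. -/
namespace KBDDiag

/-- A diagnosis problem instance (DPI) `⟨K,B,P,N⟩_R` over a Tarskian logic on sentences `L`. -/
structure DPI (L : Type*) where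
  /-- the entailment relation of the logic -/
  entails : Set L → L → Prop
  /-- entailment is monotonic -/
  entails_mono : ∀ (X Y : Set L) (α : L), entails X α → entails (X ∪ Y) α
  /-- entailment is idempotent -/
  entails_idem : ∀ (X A : Set L) (β : L),
    (∀ α ∈ A, entails X α) → entails (X ∪ A) β → entails X β
  /-- entailment is extensive -/
  entails_ext : ∀ (X : Set L) (α : L), α ∈ X → entails X α
  /-- the (possibly faulty) KB -/
  K : Set L
  /-- the background KB -/
  B : Set L
  /-- the positive test cases -/
  P : Set (Set L)
  /-- the negative test cases -/
  N : Set (Set L)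
  /-- requirements: `r X` means the KB `X` satisfies requirement `r` -/
  R : Set (Set L → Prop)
  K_finite : K.Finite
  B_finite : B.Finite
  K_B_disjoint : K ∩ B = ∅
  P_finite : P.Finite
  P_mem_finite : ∀ p ∈ P, Set.Finite p
  N_finite : N.Finite
  N_mem_finite : ∀ n ∈ N, Set.Finite n
  /-- violation of a requirement is monotone -/
  viol_mono : ∀ r ∈ R, ∀ X Y : Set L, X ⊆ Y → ¬ r X → ¬ r Y
  /-- requirements are preserved under adding entailed sentences -/
  sat_entailed : ∀ r ∈ R, ∀ X A : Set L, r X → (∀ α ∈ A, entails X α) → r (X ∪ A)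
  /-- the background KB satisfies every requirement -/
  B_sat : ∀ r ∈ R, r B

namespace DPI

variable {L : Type*} (d : DPI L)

/-- `X ⊨ Y` : X entails every sentence of Y. -/
def EntailsAll (X Y : Set L) : Prop := ∀ α ∈ Y, d.entails X α

/-- `U_P`, the union of all positive test cases. -/
def UP : Set L := ⋃₀ d.P

/-- `Ks` is a solution KB w.r.t. the DPI. -/
def IsSolutionKB (Ks : Set L) : Prop :=
  (∀ r ∈ d.R, r (Ks ∪ d.B)) ∧
  (∀ p ∈ d.P, d.EntailsAll (Ks ∪ d.B) p) ∧
  (∀ n ∈ d.N, ¬ d.EntailsAll (Ks ∪ d.B) n)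

/-- `D` is a diagnosis w.r.t. the DPI. -/
def IsDiagnosis (D : Set L) : Prop :=
  D ⊆ d.K ∧ d.IsSolutionKB ((d.K \ D) ∪ d.UP)

/-- `D` is a minimal diagnosis w.r.t. the DPI. -/
def IsMinDiagnosis (D : Set L) : Prop :=
  d.IsDiagnosis D ∧ ∀ D' ⊂ D, ¬ d.IsDiagnosis D'

/-- `C` is a conflict w.r.t. the DPI. -/
def IsConflict (C : Set L) : Prop :=
  C ⊆ d.K ∧ ¬ d.IsSolutionKB (C ∪ d.UP)

/-- `C` is a minimal conflict w.r.t. the DPI. -/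
def IsMinConflict (C : Set L) : Prop :=
  d.IsConflict C ∧ ∀ C' ⊂ C, ¬ d.IsConflict C'

/-- `Ks` is a maximal solution KB w.r.t. the DPI. -/
def IsMaxSolutionKB (Ks : Set L) : Prop :=
  d.IsSolutionKB Ks ∧ ¬ ∃ K' : Set L, d.IsSolutionKB K' ∧ Ks ∩ d.K ⊂ K' ∩ d.K

/-- `K*_i = (K \ D_i) ∪ B ∪ U_P`. -/
def Kstar (Di : Set L) : Set L := (d.K \ Di) ∪ d.B ∪ d.UP

/-- `X` violates some requirement in `R` or entails some negative test case. -/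
def Violates (X : Set L) : Prop :=
  (∃ r ∈ d.R, ¬ r X) ∨ (∃ n ∈ d.N, d.EntailsAll X n)

/-- `dx(X)` w.r.t. the leading diagnoses `Ds`. -/
def dxS (Ds : Set (Set L)) (X : Set L) : Set (Set L) :=
  {Di ∈ Ds | d.EntailsAll (d.Kstar Di) X}

/-- `dnx(X)` w.r.t. the leading diagnoses `Ds`. -/
def dnxS (Ds : Set (Set L)) (X : Set L) : Set (Set L) :=
  {Di ∈ Ds | d.Violates (d.Kstar Di ∪ X)}

/-- `dz(X)` w.r.t. the leading diagnoses `Ds`. -/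
def dzS (Ds : Set (Set L)) (X : Set L) : Set (Set L) :=
  Ds \ (d.dxS Ds X ∪ d.dnxS Ds X)

/-- `Q` is a query w.r.t. the leading diagnoses `Ds`. -/
def IsQuery (Ds : Set (Set L)) (Q : Set L) : Prop :=
  Q.Nonempty ∧ (d.dxS Ds Q).Nonempty ∧ (d.dnxS Ds Q).Nonempty

/-- The canonical query `Q_can(S) = (K \ U_S) ∩ (U_D \ I_D)` w.r.t. the seed `S`. -/
def Qcan (Ds S : Set (Set L)) : Set L := (d.K \ ⋃₀ S) ∩ (⋃₀ Ds \ ⋂₀ Ds)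

/-- `⟨dxp, dnxp, ∅⟩` is a canonical q-partition of `Ds`. -/
def IsCanonicalQPartition (Ds dxp dnxp : Set (Set L)) : Prop :=
  dxp ∪ dnxp = Ds ∧ dxp ∩ dnxp = ∅ ∧
  dxp.Nonempty ∧ dxp ⊂ Ds ∧
  (d.Qcan Ds dxp).Nonempty ∧
  d.dxS Ds (d.Qcan Ds dxp) = dxp ∧
  d.dnxS Ds (d.Qcan Ds dxp) = dnxp ∧
  d.dzS Ds (d.Qcan Ds dxp) = ∅

end DPI

/-- `Disc_D = U_D \ I_D`, the discrimination sentences w.r.t. `Ds`. -/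
def Disc {L : Type*} (Ds : Set (Set L)) : Set L := ⋃₀ Ds \ ⋂₀ Ds

/-- `H` is a hitting set of the collection `S`. -/
def IsHittingSet {α : Type*} (S : Set (Set α)) (H : Set α) : Prop :=
  H ⊆ ⋃₀ S ∧ ∀ s ∈ S, (H ∩ s).Nonempty

/-- `H` is a minimal hitting set of the collection `S`. -/
def IsMinHittingSet {α : Type*} (S : Set (Set α)) (H : Set α) : Prop :=
  IsHittingSet S H ∧ ∀ H' ⊂ H, ¬ IsHittingSet S H'

/-- `MHS S`, the set of all minimal hitting sets of `S`. -/
def MHS {α : Type*} (S : Set (Set α)) : Set (Set α) :=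
  {H | IsMinHittingSet S H}


/-- For `∅ ⊂ dxp ⊂ Ds`, `(K \ U_dxp) ∩ Disc_D = U_Ds \ U_dxp`, which equals
the union of the traits `Di \ U_dxp` over all `Di ∈ Ds \ dxp`. -/
theorem statement16 {L : Type*} (d : DPI L) (Ds : Set (Set L))
    (hDs : ∀ Di ∈ Ds, d.IsMinDiagnosis Di)
    (dxp : Set (Set L)) (hne : dxp.Nonempty) (hss : dxp ⊂ Ds) :
    d.Qcan Ds dxp = ⋃₀ Ds \ ⋃₀ dxp ∧
    ⋃₀ Ds \ ⋃₀ dxp = ⋃ Di ∈ Ds \ dxp, (Di \ ⋃₀ dxp) := by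
  constructor
  · ext a
    simp only [DPI.Qcan, Set.mem_inter_iff, Set.mem_diff]
    constructor
    · rintro ⟨⟨hK, hdx⟩, hU, hI⟩
      exact ⟨hU, hdx⟩
    · rintro ⟨hU, hdx⟩
      obtain ⟨Di, hDi, ha⟩ := hU
      refine ⟨⟨(hDs Di hDi).1.1 ha, hdx⟩, ⟨Di, hDi, ha⟩, ?_⟩
      intro hI
      obtain ⟨D0, hD0⟩ := hne
      exact hdx ⟨D0, hD0, hI D0 (hss.1 hD0)⟩
  · ext a
    simp only [Set.mem_diff, Set.mem_sUnion, Set.mem_iUnion]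
    constructor
    · rintro ⟨⟨Di, hDi, ha⟩, hdx⟩
      refine ⟨Di, ⟨hDi, fun h => hdx ⟨Di, h, ha⟩⟩, ha, hdx⟩
    · rintro ⟨Di, ⟨hDi, _⟩, ha, hdx⟩
      exact ⟨⟨Di, hDi, ha⟩, hdx⟩

end KBDDiag
end

section
/- Let ⟨K,B,P,N⟩_R be a DPI, D a set of minimal diagnoses w.r.t. it, and P = ⟨dx, dnx, ∅⟩ a q-partition w.r.t. D (i.e., the q-partition of some query w.r.t. D). Then for every Q ⊆ Disc_D: Q is a query w.r.t. D whose q-partition equals P if and only if there exists a minimal hitting set H ∈ MHS(dnx) with H ⊆ Q ⊆ Q_can(dx). -/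
namespace KBDDiag

namespace DPI
section Aux

variable {L : Type*} (d : DPI L)

lemma entails_mono' {X Y : Set L} {α : L} (h : X ⊆ Y) (hx : d.entails X α) :
    d.entails Y α := by
  have := d.entails_mono X Y α hx
  rwa [Set.union_eq_self_of_subset_left h] at this

lemma kstar_sat {Di : Set L} (h : d.IsDiagnosis Di) :
    (∀ r ∈ d.R, r (d.Kstar Di)) ∧ ∀ n ∈ d.N, ¬ d.EntailsAll (d.Kstar Di) n := by
  obtain ⟨-, hr, -, hn⟩ := h
  have he : (d.K \ Di ∪ d.UP) ∪ d.B = d.Kstar Di := by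
    unfold DPI.Kstar; ext x; simp only [Set.mem_union]; tauto
  rw [he] at hr hn
  exact ⟨hr, hn⟩

/-- If `K*_i ⊨ X` then `K*_i ∪ X` does not violate anything. -/
lemma not_violates_of_entails {Di X : Set L} (hdi : d.IsDiagnosis Di)
    (hent : d.EntailsAll (d.Kstar Di) X) : ¬ d.Violates (d.Kstar Di ∪ X) := by
  rintro (⟨r, hr, hviol⟩ | ⟨n, hn, hent'⟩)
  · exact hviol (d.sat_entailed r hr _ X ((d.kstar_sat hdi).1 r hr) hent)
  · exact (d.kstar_sat hdi).2 n hn fun β hβ => d.entails_idem _ X β hent (hent' β hβ)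

lemma mem_dx {Ds : Set (Set L)} {Di Q : Set L} (hDi : Di ∈ Ds)
    (hdiag : d.IsDiagnosis Di) (hQK : Q ⊆ d.K) (hdisj : Q ∩ Di = ∅) :
    Di ∈ d.dxS Ds Q := by
  refine ⟨hDi, fun α hα => d.entails_ext _ α ?_⟩
  have hαD : α ∉ Di := fun hd => (Set.eq_empty_iff_forall_notMem.mp hdisj α) ⟨hα, hd⟩
  exact Or.inl (Or.inl ⟨hQK hα, hαD⟩)

lemma mem_dnx {Ds : Set (Set L)} {Di Q : Set L} (hDi : Di ∈ Ds)
    (hmin : d.IsMinDiagnosis Di) (hQK : Q ⊆ d.K) (hne : (Q ∩ Di).Nonempty) :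
    Di ∈ d.dnxS Ds Q := by
  refine ⟨hDi, ?_⟩
  obtain ⟨x, hxQ, hxD⟩ := hne
  have hssub : Di \ Q ⊂ Di := by
    refine Set.ssubset_iff_of_subset Set.diff_subset |>.mpr ?_
    exact ⟨x, hxD, fun hx => hx.2 hxQ⟩
  have hnd : ¬ d.IsDiagnosis (Di \ Q) := hmin.2 _ hssub
  have hD'K : Di \ Q ⊆ d.K := fun y hy => hmin.1.1 hy.1
  have hns : ¬ d.IsSolutionKB ((d.K \ (Di \ Q)) ∪ d.UP) := fun h => hnd ⟨hD'K, h⟩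
  -- the candidate solution KB entails all positive test cases extensively
  have hp : ∀ p ∈ d.P, d.EntailsAll ((d.K \ (Di \ Q)) ∪ d.UP ∪ d.B) p :=
    fun p hpP α hα => d.entails_ext _ α (Or.inl (Or.inr ⟨p, hpP, hα⟩))
  have hnac : ¬ ((∀ r ∈ d.R, r ((d.K \ (Di \ Q)) ∪ d.UP ∪ d.B)) ∧
      ∀ n ∈ d.N, ¬ d.EntailsAll ((d.K \ (Di \ Q)) ∪ d.UP ∪ d.B) n) :=
    fun ⟨a, c⟩ => hns ⟨a, hp, c⟩
  have hsub : (d.K \ (Di \ Q)) ∪ d.UP ∪ d.B ⊆ d.Kstar Di ∪ Q := by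
    intro y hy
    rcases hy with (⟨hyK, hyD⟩ | hyU) | hyB
    · by_cases hyQ : y ∈ Q
      · exact Or.inr hyQ
      · exact Or.inl (Or.inl (Or.inl ⟨hyK, fun hd => hyD ⟨hd, hyQ⟩⟩))
    · exact Or.inl (Or.inr hyU)
    · exact Or.inl (Or.inl (Or.inr hyB))
  rcases not_and_or.mp hnac with ha | hc
  · push_neg at ha
    obtain ⟨r, hrR, hrv⟩ := ha
    exact Or.inl ⟨r, hrR, d.viol_mono r hrR _ _ hsub hrv⟩
  · push_neg at hc
    obtain ⟨n, hnN, hnent⟩ := hc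
    exact Or.inr ⟨n, hnN, fun β hβ => d.entails_mono' hsub (hnent β hβ)⟩

lemma dx_disj_dnx {Ds : Set (Set L)} {Di Q : Set L} (hdiag : d.IsDiagnosis Di)
    (hx : Di ∈ d.dxS Ds Q) : Di ∉ d.dnxS Ds Q :=
  fun hn => d.not_violates_of_entails hdiag hx.2 hn.2

/-- Any finite hitting set contains a minimal hitting set. -/
lemma exists_min_hittingSet_subset {α : Type*} {S : Set (Set α)} {H0 : Set α}
    (hfin : H0.Finite) (hhs : IsHittingSet S H0) :
    ∃ H, IsMinHittingSet S H ∧ H ⊆ H0 := by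
  set T : Set (Set α) := {H | H ⊆ H0 ∧ IsHittingSet S H} with hT
  have hTfin : T.Finite := hfin.finite_subsets.subset fun H hH => hH.1
  have hTne : T.Nonempty := ⟨H0, subset_rfl, hhs⟩
  obtain ⟨H, hHT, hmin⟩ := Set.Finite.exists_minimalFor id T hTfin hTne
  refine ⟨H, ⟨hHT.2, fun H' hH' hhs' => ?_⟩, hHT.1⟩
  have : H' ∈ T := ⟨hH'.subset.trans hHT.1, hhs'⟩
  exact hH'.2 (hmin this hH'.subset)

end Aux
end DPI

/-- For a q-partition `P = ⟨dxp, dnxp, ∅⟩` of some query w.r.t. `Ds` and any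
`Q ⊆ Disc_D`: `Q` is a query with q-partition `P` iff some `H ∈ MHS(dnxp)` satisfies
`H ⊆ Q ⊆ Q_can(dxp)`. -/
theorem statement17 {L : Type*} (d : DPI L) (Ds : Set (Set L))
    (hDs : ∀ Di ∈ Ds, d.IsMinDiagnosis Di)
    (dxp dnxp : Set (Set L))
    (hP : ∃ Q0 : Set L, d.IsQuery Ds Q0 ∧ d.dxS Ds Q0 = dxp ∧ d.dnxS Ds Q0 = dnxp ∧
      d.dzS Ds Q0 = ∅)
    (Q : Set L) (hQ : Q ⊆ Disc Ds) :
    (d.IsQuery Ds Q ∧ d.dxS Ds Q = dxp ∧ d.dnxS Ds Q = dnxp ∧ d.dzS Ds Q = ∅) ↔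
      ∃ H ∈ MHS dnxp, H ⊆ Q ∧ Q ⊆ d.Qcan Ds dxp := by
  obtain ⟨Q0, ⟨-, hdx0, hdnx0⟩, hdxp, hdnxp, hdz0⟩ := hP
  -- basic facts
  have hdiag : ∀ Di ∈ Ds, d.IsDiagnosis Di := fun Di hDi => (hDs Di hDi).1
  have hUK : ⋃₀ Ds ⊆ d.K := fun x ⟨Di, hDi, hx⟩ => (hdiag Di hDi).1 hx
  have hQK : Q ⊆ d.K := fun x hx => hUK (hQ hx).1
  have hdxpne : dxp.Nonempty := hdxp ▸ hdx0
  have hdnxpne : dnxp.Nonempty := hdnxp ▸ hdnx0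
  have hdxpDs : dxp ⊆ Ds := hdxp ▸ fun Di hDi => hDi.1
  have hdnxpDs : dnxp ⊆ Ds := hdnxp ▸ fun Di hDi => hDi.1
  have hcover : ∀ Di ∈ Ds, Di ∈ dxp ∨ Di ∈ dnxp := by
    intro Di hDi
    by_contra hcon
    push_neg at hcon
    have : Di ∈ d.dzS Ds Q0 :=
      ⟨hDi, fun h => h.elim (fun h1 => hcon.1 (hdxp ▸ h1)) fun h2 => hcon.2 (hdnxp ▸ h2)⟩
    simp [hdz0] at this
  have hdisjp : ∀ Di ∈ dxp, Di ∉ dnxp := by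
    intro Di hDi hDin
    exact d.dx_disj_dnx (hdiag Di (hdxpDs hDi)) (hdxp ▸ hDi) (hdnxp ▸ hDin)
  constructor
  · rintro ⟨-, hdxQ, hdnxQ, -⟩
    -- every diagnosis in dnxp is hit by Q
    have hhit : ∀ Di ∈ dnxp, (Q ∩ Di).Nonempty := by
      intro Di hDi
      rcases Set.eq_empty_or_nonempty (Q ∩ Di) with he | hne
      · exact absurd (hdnxQ ▸ hDi)
          (d.dx_disj_dnx (hdiag Di (hdnxpDs hDi))
            (d.mem_dx (hdnxpDs hDi) (hdiag Di (hdnxpDs hDi)) hQK he))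
      · exact hne
    -- Q avoids every diagnosis in dxp
    have havoid : ∀ Di ∈ dxp, Q ∩ Di = ∅ := by
      intro Di hDi
      rcases Set.eq_empty_or_nonempty (Q ∩ Di) with he | hne
      · exact he
      · exact absurd (hdnxQ ▸ d.mem_dnx (hdxpDs hDi) (hDs Di (hdxpDs hDi)) hQK hne)
          (hdisjp Di hDi)
    have hH0 : IsHittingSet dnxp (Q ∩ ⋃₀ dnxp) := by
      refine ⟨Set.inter_subset_right, fun s hs => ?_⟩
      obtain ⟨x, hxQ, hxs⟩ := hhit s hs
      exact ⟨x, ⟨hxQ, ⟨s, hs, hxs⟩⟩, hxs⟩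
    have hfin : (Q ∩ ⋃₀ dnxp).Finite :=
      d.K_finite.subset (Set.inter_subset_left.trans hQK)
    obtain ⟨H, hHmin, hHsub⟩ := DPI.exists_min_hittingSet_subset hfin hH0
    refine ⟨H, hHmin, hHsub.trans Set.inter_subset_left, fun x hx => ⟨⟨hQK hx, ?_⟩, hQ hx⟩⟩
    rintro ⟨Di, hDi, hxDi⟩
    exact Set.eq_empty_iff_forall_notMem.mp (havoid Di hDi) x ⟨hx, hxDi⟩
  · rintro ⟨H, ⟨hHhs, -⟩, hHQ, hQcan⟩
    -- Q hits every diagnosis in dnxp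
    have hhit : ∀ Di ∈ dnxp, (Q ∩ Di).Nonempty := by
      intro Di hDi
      obtain ⟨x, hxH, hxDi⟩ := hHhs.2 Di hDi
      exact ⟨x, hHQ hxH, hxDi⟩
    -- Q avoids every diagnosis in dxp
    have havoid : ∀ Di ∈ dxp, Q ∩ Di = ∅ := by
      intro Di hDi
      ext x
      simp only [Set.mem_inter_iff, Set.mem_empty_iff_false, iff_false, not_and]
      intro hxQ hxDi
      exact (hQcan hxQ).1.2 ⟨Di, hDi, hxDi⟩
    have hdxQ : d.dxS Ds Q = dxp := by
      ext Di
      constructor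
      · intro hDi
        rcases hcover Di hDi.1 with h | h
        · exact h
        · exact absurd (d.mem_dnx hDi.1 (hDs Di hDi.1) hQK (hhit Di h))
            (d.dx_disj_dnx (hdiag Di hDi.1) hDi)
      · intro hDi
        exact d.mem_dx (hdxpDs hDi) (hdiag Di (hdxpDs hDi)) hQK (havoid Di hDi)
    have hdnxQ : d.dnxS Ds Q = dnxp := by
      ext Di
      constructor
      · intro hDi
        rcases hcover Di hDi.1 with h | h
        · exact absurd hDi
            (d.dx_disj_dnx (hdiag Di hDi.1)
              (d.mem_dx hDi.1 (hdiag Di hDi.1) hQK (havoid Di h)))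
        · exact h
      · intro hDi
        exact d.mem_dnx (hdnxpDs hDi) (hDs Di (hdnxpDs hDi)) hQK (hhit Di hDi)
    have hQne : Q.Nonempty := by
      obtain ⟨Di, hDi⟩ := hdnxpne
      obtain ⟨x, hxQ, -⟩ := hhit Di hDi
      exact ⟨x, hxQ⟩
    refine ⟨⟨hQne, hdxQ ▸ hdxpne, hdnxQ ▸ hdnxpne⟩, hdxQ, hdnxQ, ?_⟩
    ext Di
    simp only [DPI.dzS, Set.mem_diff, Set.mem_union, Set.mem_empty_iff_false, iff_false,
      not_and, not_not]
    intro hDi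
    rcases hcover Di hDi with h | h
    · exact Or.inl (hdxQ ▸ h)
    · exact Or.inr (hdnxQ ▸ h)

end KBDDiag
end

section
/- Let ⟨K,B,P,N⟩_R be a DPI, D a set of minimal diagnoses w.r.t. it, and P_k = ⟨dx_k, dnx_k, ∅⟩ a q-partition w.r.t. D (i.e., the q-partition of some query w.r.t. D). Then for every Q ⊆ Disc_D: Q is a ⊆-minimal query w.r.t. D with q-partition P_k (that is, a query with q-partition P_k such that no proper subset of Q is a query with q-partition P_k) if and only if Q ∈ MHS(Tr(P_k)), the set of minimal hitting sets of the collection of traits of the diagnoses in dnx_k. -/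
namespace KBDDiag

section Aux

variable {L : Type*} (d : DPI L)

lemma entails_mono' {X Y : Set L} (h : X ⊆ Y) {α : L}
    (hX : d.entails X α) : d.entails Y α := by
  have := d.entails_mono X Y α hX
  rwa [Set.union_eq_self_of_subset_left h] at this

lemma not_viol {Di : Set L} (hDi : d.IsMinDiagnosis Di) :
    ¬ d.Violates (d.Kstar Di) := by
  obtain ⟨⟨hsub, hr, hp, hn⟩, -⟩ := hDi
  have heq : ((d.K \ Di) ∪ d.UP) ∪ d.B = d.Kstar Di := by
    ext x; simp only [DPI.Kstar, Set.mem_union]; tauto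
  rintro (⟨r, hrR, hrX⟩ | ⟨n, hnN, hent⟩)
  · exact hrX (heq ▸ hr r hrR)
  · exact hn n hnN (by rw [heq]; exact hent)

lemma dx_dnx_disjoint {Ds : Set (Set L)} {X : Set L} {Di : Set L}
    (hDi : d.IsMinDiagnosis Di)
    (hx : Di ∈ d.dxS Ds X) (hnx : Di ∈ d.dnxS Ds X) : False := by
  obtain ⟨-, hent⟩ := hx
  obtain ⟨-, hviol⟩ := hnx
  have hnv := not_viol d hDi
  rcases hviol with ⟨r, hrR, hrX⟩ | ⟨n, hnN, hentn⟩
  · have hrK : r (d.Kstar Di) := by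
      by_contra h
      exact hnv (Or.inl ⟨r, hrR, h⟩)
    exact hrX (d.sat_entailed r hrR _ _ hrK hent)
  · refine hnv (Or.inr ⟨n, hnN, fun β hβ => ?_⟩)
    exact d.entails_idem _ X β hent (hentn β hβ)

lemma mem_dnx_of_inter {Ds : Set (Set L)} {X : Set L} (hXK : X ⊆ d.K)
    {Di : Set L} (hDiDs : Di ∈ Ds) (hDi : d.IsMinDiagnosis Di)
    {α : L} (hαX : α ∈ X) (hαDi : α ∈ Di) : Di ∈ d.dnxS Ds X := by
  obtain ⟨⟨hsub, -⟩, hmin⟩ := hDi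
  have hss : Di \ {α} ⊂ Di :=
    ⟨Set.diff_subset, fun h => (h hαDi).2 rfl⟩
  have hnd : ¬ d.IsDiagnosis (Di \ {α}) := hmin _ hss
  have hnsol : ¬ d.IsSolutionKB ((d.K \ (Di \ {α})) ∪ d.UP) := by
    intro h; exact hnd ⟨Set.diff_subset.trans hsub, h⟩
  -- positive test cases are always entailed
  have hpos : ∀ p ∈ d.P, d.EntailsAll (((d.K \ (Di \ {α})) ∪ d.UP) ∪ d.B) p := by
    intro p hp β hβ
    exact d.entails_ext _ β (Or.inl (Or.inr ⟨p, hp, hβ⟩))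
  have hsubset : ((d.K \ (Di \ {α})) ∪ d.UP) ∪ d.B ⊆ d.Kstar Di ∪ X := by
    intro x hx
    simp only [DPI.Kstar, Set.mem_union, Set.mem_diff, Set.mem_singleton_iff] at hx ⊢
    rcases hx with (⟨hxK, hxn⟩ | hUP) | hB
    · by_cases hxDi : x ∈ Di
      · right
        have : x = α := by tauto
        exact this ▸ hαX
      · exact Or.inl (Or.inl (Or.inl ⟨hxK, hxDi⟩))
    · exact Or.inl (Or.inr hUP)
    · exact Or.inl (Or.inl (Or.inr hB))
  refine ⟨hDiDs, ?_⟩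
  have hcase : (∃ r ∈ d.R, ¬ r (((d.K \ (Di \ {α})) ∪ d.UP) ∪ d.B)) ∨
      ∃ n ∈ d.N, d.EntailsAll (((d.K \ (Di \ {α})) ∪ d.UP) ∪ d.B) n := by
    by_contra hcon
    push_neg at hcon
    exact hnsol ⟨hcon.1, hpos, hcon.2⟩
  rcases hcase with ⟨r, hrR, hrX⟩ | ⟨n, hnN, hne⟩
  · exact Or.inl ⟨r, hrR, d.viol_mono r hrR _ _ hsubset hrX⟩
  · exact Or.inr ⟨n, hnN, fun β hβ => entails_mono' d hsubset (hne β hβ)⟩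

lemma mem_dx_of_empty {Ds : Set (Set L)} {X : Set L} (hXK : X ⊆ d.K)
    {Di : Set L} (hDiDs : Di ∈ Ds) (hdisj : X ∩ Di = ∅) : Di ∈ d.dxS Ds X := by
  refine ⟨hDiDs, fun β hβ => d.entails_ext _ β ?_⟩
  have hβDi : β ∉ Di := fun h => by
    have : β ∈ X ∩ Di := ⟨hβ, h⟩
    rw [hdisj] at this; exact this
  exact Or.inl (Or.inl ⟨hXK hβ, hβDi⟩)

end Aux

/-- For a q-partition `P_k = ⟨dxk, dnxk, ∅⟩` of some query w.r.t. `Ds` and any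
`Q ⊆ Disc_D`: `Q` is a ⊆-minimal query with q-partition `P_k` iff `Q ∈ MHS(Tr(P_k))`. -/
theorem statement18 {L : Type*} (d : DPI L) (Ds : Set (Set L))
    (hDs : ∀ Di ∈ Ds, d.IsMinDiagnosis Di)
    (dxk dnxk : Set (Set L))
    (hP : ∃ Q0 : Set L, d.IsQuery Ds Q0 ∧ d.dxS Ds Q0 = dxk ∧ d.dnxS Ds Q0 = dnxk ∧
      d.dzS Ds Q0 = ∅)
    (Q : Set L) (hQ : Q ⊆ Disc Ds) :
    (d.IsQuery Ds Q ∧ d.dxS Ds Q = dxk ∧ d.dnxS Ds Q = dnxk ∧ d.dzS Ds Q = ∅ ∧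
      ∀ Q' ⊂ Q, ¬ (d.IsQuery Ds Q' ∧ d.dxS Ds Q' = dxk ∧ d.dnxS Ds Q' = dnxk ∧
        d.dzS Ds Q' = ∅)) ↔
      Q ∈ MHS ((fun Di : Set L => Di \ ⋃₀ dxk) '' dnxk) := by
  classical
  obtain ⟨Q0, ⟨hQ0ne, hdx0ne, hdnx0ne⟩, hdxk, hdnxk, hdz0⟩ := hP
  have hDsK : ∀ Di ∈ Ds, Di ⊆ d.K := fun Di hDi => (hDs Di hDi).1.1
  have hDiscK : Disc Ds ⊆ d.K := by
    rintro x ⟨hx, -⟩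
    obtain ⟨Di, hDi, hxDi⟩ := hx
    exact hDsK Di hDi hxDi
  have hdxkDs : dxk ⊆ Ds := by rw [← hdxk]; exact fun Di h => h.1
  have hdnxkDs : dnxk ⊆ Ds := by rw [← hdnxk]; exact fun Di h => h.1
  have hdisj : ∀ Di, Di ∈ dxk → Di ∈ dnxk → False := by
    intro Di h1 h2
    exact dx_dnx_disjoint d (hDs Di (hdxkDs h1)) (hdxk ▸ h1) (hdnxk ▸ h2)
  have hcover : ∀ Di ∈ Ds, Di ∈ dxk ∨ Di ∈ dnxk := by
    intro Di hDi
    by_contra hcon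
    push_neg at hcon
    have : Di ∈ d.dzS Ds Q0 := by
      refine ⟨hDi, ?_⟩
      rintro (h | h)
      · exact hcon.1 (hdxk ▸ h)
      · exact hcon.2 (hdnxk ▸ h)
    rw [hdz0] at this
    exact this
  have hdxkne : dxk.Nonempty := hdxk ▸ hdx0ne
  have hdnxkne : dnxk.Nonempty := hdnxk ▸ hdnx0ne
  -- the key pointwise equivalence on subsets of `Disc Ds`
  have key : ∀ X : Set L, X ⊆ Disc Ds →
      ((d.IsQuery Ds X ∧ d.dxS Ds X = dxk ∧ d.dnxS Ds X = dnxk ∧ d.dzS Ds X = ∅) ↔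
        IsHittingSet ((fun Di : Set L => Di \ ⋃₀ dxk) '' dnxk) X) := by
    intro X hXD
    have hXK : X ⊆ d.K := hXD.trans hDiscK
    constructor
    · rintro ⟨-, hdxX, hdnxX, -⟩
      have hXU : ∀ x ∈ X, x ∉ ⋃₀ dxk := by
        rintro x hxX ⟨Dj, hDj, hxDj⟩
        have hjdx : Dj ∈ d.dxS Ds X := hdxX ▸ hDj
        have hjdnx : Dj ∈ d.dnxS Ds X :=
          mem_dnx_of_inter d hXK (hdxkDs hDj) (hDs Dj (hdxkDs hDj)) hxX hxDj
        exact dx_dnx_disjoint d (hDs Dj (hdxkDs hDj)) hjdx hjdnx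
      constructor
      · intro x hxX
        obtain ⟨hx1, -⟩ := hXD hxX
        obtain ⟨Di, hDi, hxDi⟩ := hx1
        have hDin : Di ∈ dnxk := by
          rcases hcover Di hDi with h | h
          · exact absurd ⟨Di, h, hxDi⟩ (hXU x hxX)
          · exact h
        exact ⟨Di \ ⋃₀ dxk, ⟨Di, hDin, rfl⟩, hxDi, hXU x hxX⟩
      · rintro s ⟨Di, hDi, rfl⟩
        have hidnx : Di ∈ d.dnxS Ds X := hdnxX ▸ hDi
        have hXDi : (X ∩ Di).Nonempty := by
          by_contra h
          rw [Set.not_nonempty_iff_eq_empty] at h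
          exact dx_dnx_disjoint d (hDs Di (hdnxkDs hDi))
            (mem_dx_of_empty d hXK (hdnxkDs hDi) h) hidnx
        obtain ⟨α, hαX, hαDi⟩ := hXDi
        exact ⟨α, hαX, hαDi, hXU α hαX⟩
    · rintro ⟨hsub, hhit⟩
      have hXU : ∀ x ∈ X, x ∉ ⋃₀ dxk := by
        intro x hxX
        obtain ⟨s, ⟨Di, hDi, rfl⟩, hxs⟩ := hsub hxX
        exact hxs.2
      have hdxX : ∀ Dj ∈ dxk, Dj ∈ d.dxS Ds X := by
        intro Dj hDj
        refine mem_dx_of_empty d hXK (hdxkDs hDj) ?_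
        ext x
        simp only [Set.mem_inter_iff, Set.mem_empty_iff_false, iff_false, not_and]
        exact fun hx hxDj => hXU x hx ⟨Dj, hDj, hxDj⟩
      have hdnxX : ∀ Di ∈ dnxk, Di ∈ d.dnxS Ds X := by
        intro Di hDi
        obtain ⟨α, hαX, hαDi, -⟩ := hhit (Di \ ⋃₀ dxk) ⟨Di, hDi, rfl⟩
        exact mem_dnx_of_inter d hXK (hdnxkDs hDi) (hDs Di (hdnxkDs hDi)) hαX hαDi
      have heqdx : d.dxS Ds X = dxk := by
        ext Di
        constructor
        · intro hdi
          rcases hcover Di hdi.1 with h | h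
          · exact h
          · exact absurd (hdnxX Di h)
              (fun hc => dx_dnx_disjoint d (hDs Di hdi.1) hdi hc)
        · exact hdxX Di
      have heqdnx : d.dnxS Ds X = dnxk := by
        ext Di
        constructor
        · intro hdi
          rcases hcover Di hdi.1 with h | h
          · exact absurd (hdxX Di h)
              (fun hc => dx_dnx_disjoint d (hDs Di hdi.1) hc hdi)
          · exact h
        · exact hdnxX Di
      have hXne : X.Nonempty := by
        obtain ⟨Di, hDi⟩ := hdnxkne
        obtain ⟨α, hαX, -⟩ := hhit (Di \ ⋃₀ dxk) ⟨Di, hDi, rfl⟩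
        exact ⟨α, hαX⟩
      refine ⟨⟨hXne, ?_, ?_⟩, heqdx, heqdnx, ?_⟩
      · rw [heqdx]; exact hdxkne
      · rw [heqdnx]; exact hdnxkne
      · ext Di
        simp only [DPI.dzS, Set.mem_diff, Set.mem_union, heqdx, heqdnx,
          Set.mem_empty_iff_false, iff_false, not_and, not_not]
        exact hcover Di
  constructor
  · rintro ⟨h1, h2, h3, h4, hmin⟩
    refine ⟨(key Q hQ).mp ⟨h1, h2, h3, h4⟩, ?_⟩
    intro Q' hQ' hhit
    exact hmin Q' hQ' ((key Q' (hQ'.subset.trans hQ)).mpr hhit)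
  · rintro ⟨hhs, hminhs⟩
    obtain ⟨h1, h2, h3, h4⟩ := (key Q hQ).mpr hhs
    refine ⟨h1, h2, h3, h4, ?_⟩
    intro Q' hQ' hq'
    exact hminhs Q' hQ' ((key Q' (hQ'.subset.trans hQ)).mp hq')

end KBDDiag
end

section
/- Let ⟨K,B,P,N⟩_R be a DPI, D a set of minimal diagnoses w.r.t. it, and Q a query w.r.t. D with Q ⊆ K. Then the q-partition ⟨dx(Q), dnx(Q), dz(Q)⟩ of Q is a canonical q-partition (i.e., dz(Q) = ∅ and the q-partition of the canonical query Q_can(dx(Q)) equals ⟨dx(Q), dnx(Q), ∅⟩). -/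
namespace KBDDiag

namespace DPI

variable {L : Type*} (d : DPI L)

lemma kstar_eq (D : Set L) : ((d.K \ D) ∪ d.UP) ∪ d.B = d.Kstar D := by
  unfold Kstar; ext x; simp only [Set.mem_union]; tauto

lemma kstar_union {X : Set L} (hX : X ⊆ d.K) (D : Set L) :
    d.Kstar D ∪ X = d.Kstar (D \ X) := by
  unfold Kstar; ext x
  simp only [Set.mem_union, Set.mem_diff, not_and, not_not]
  have := @hX x
  tauto

lemma diag_iff (D : Set L) :
    d.IsDiagnosis D ↔ D ⊆ d.K ∧
      (∀ r ∈ d.R, r (d.Kstar D)) ∧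
      (∀ p ∈ d.P, d.EntailsAll (d.Kstar D) p) ∧
      (∀ n ∈ d.N, ¬ d.EntailsAll (d.Kstar D) n) := by
  unfold IsDiagnosis IsSolutionKB
  rw [d.kstar_eq D]

lemma not_violates_of_entailsAll {X Di : Set L} (hDi : d.IsDiagnosis Di)
    (hE : d.EntailsAll (d.Kstar Di) X) :
    ¬ d.Violates (d.Kstar Di ∪ X) := by
  rw [diag_iff] at hDi
  obtain ⟨_, hR, _, hN⟩ := hDi
  rintro (⟨r, hr, hviol⟩ | ⟨n, hn, hent⟩)
  · exact hviol (d.sat_entailed r hr _ X (hR r hr) hE)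
  · exact hN n hn (fun β hβ => d.entails_idem _ X β hE (hent β hβ))

lemma inter_empty_of_not_violates {X Di : Set L} (hX : X ⊆ d.K)
    (hDi : d.IsMinDiagnosis Di) (hnv : ¬ d.Violates (d.Kstar Di ∪ X)) :
    Di ∩ X = ∅ := by
  obtain ⟨hdiag, hmin⟩ := hDi
  rw [diag_iff] at hdiag
  obtain ⟨hsub, hR, hP, hN⟩ := hdiag
  have hdiag' : d.IsDiagnosis (Di \ X) := by
    rw [diag_iff, ← d.kstar_union hX Di]
    refine ⟨Set.diff_subset.trans hsub, ?_, ?_, ?_⟩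
    · intro r hr; by_contra h; exact hnv (Or.inl ⟨r, hr, h⟩)
    · intro p hp α hα; exact d.entails_mono _ X α (hP p hp α hα)
    · intro n hn h; exact hnv (Or.inr ⟨n, hn, h⟩)
  by_contra h
  obtain ⟨x, hxD, hxX⟩ := Set.nonempty_iff_ne_empty.mpr h
  have hss : Di \ X ⊂ Di :=
    ⟨Set.diff_subset, fun hsub' => (hsub' hxD).2 hxX⟩
  exact hmin _ hss hdiag'

lemma entailsAll_of_inter_empty {X Di : Set L} (hX : X ⊆ d.K)
    (h : Di ∩ X = ∅) : d.EntailsAll (d.Kstar Di) X := by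
  intro α hα
  apply d.entails_ext
  left; left
  refine ⟨hX hα, fun hD => ?_⟩
  have : α ∈ Di ∩ X := ⟨hD, hα⟩
  rw [h] at this
  exact this

lemma dx_char {Ds : Set (Set L)} (hDs : ∀ Di ∈ Ds, d.IsMinDiagnosis Di)
    {X : Set L} (hX : X ⊆ d.K) :
    d.dxS Ds X = {Di ∈ Ds | Di ∩ X = ∅} := by
  ext Di
  simp only [dxS, Set.mem_setOf_eq]
  constructor
  · rintro ⟨hmem, hE⟩
    exact ⟨hmem, d.inter_empty_of_not_violates hX (hDs Di hmem)
      (d.not_violates_of_entailsAll (hDs Di hmem).1 hE)⟩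
  · rintro ⟨hmem, h⟩
    exact ⟨hmem, d.entailsAll_of_inter_empty hX h⟩

lemma dnx_char {Ds : Set (Set L)} (hDs : ∀ Di ∈ Ds, d.IsMinDiagnosis Di)
    {X : Set L} (hX : X ⊆ d.K) :
    d.dnxS Ds X = {Di ∈ Ds | Di ∩ X ≠ ∅} := by
  ext Di
  simp only [dnxS, Set.mem_setOf_eq]
  constructor
  · rintro ⟨hmem, hV⟩
    refine ⟨hmem, fun h => ?_⟩
    exact d.not_violates_of_entailsAll (hDs Di hmem).1
      (d.entailsAll_of_inter_empty hX h) hV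
  · rintro ⟨hmem, h⟩
    refine ⟨hmem, ?_⟩
    by_contra hnv
    exact h (d.inter_empty_of_not_violates hX (hDs Di hmem) hnv)

end DPI

/-- The q-partition of any query `Q ⊆ K` w.r.t. `Ds` is a canonical
q-partition. -/
theorem statement19 {L : Type*} (d : DPI L) (Ds : Set (Set L))
    (hDs : ∀ Di ∈ Ds, d.IsMinDiagnosis Di)
    (Q : Set L) (hQK : Q ⊆ d.K) (hQ : d.IsQuery Ds Q) :
    d.dzS Ds Q = ∅ ∧
    d.IsCanonicalQPartition Ds (d.dxS Ds Q) (d.dnxS Ds Q) := by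
  obtain ⟨hQne, hdxne, hdnxne⟩ := hQ
  have hdx := d.dx_char hDs hQK
  have hdnx := d.dnx_char hDs hQK
  set Qc := d.Qcan Ds (d.dxS Ds Q) with hQc
  have hQcK : Qc ⊆ d.K := fun x hx => hx.1.1
  -- key iff : for Di ∈ Ds, Di ∩ Qc = ∅ ↔ Di ∩ Q = ∅
  obtain ⟨D0, hD0⟩ := hdxne
  have hD0' : D0 ∈ Ds ∧ D0 ∩ Q = ∅ := by rw [hdx] at hD0; exact hD0
  have key : ∀ Di ∈ Ds, (Di ∩ Qc = ∅ ↔ Di ∩ Q = ∅) := by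
    intro Di hDi
    constructor
    · intro h
      by_contra hne
      obtain ⟨α, hαD, hαQ⟩ := Set.nonempty_iff_ne_empty.mpr hne
      have hαQc : α ∈ Qc := by
        refine ⟨⟨hQK hαQ, ?_⟩, ⟨Di, hDi, hαD⟩, ?_⟩
        · rintro ⟨Dj, hDj, hαDj⟩
          rw [hdx] at hDj
          have : α ∈ Dj ∩ Q := ⟨hαDj, hαQ⟩
          rw [hDj.2] at this; exact this
        · intro hall
          have : α ∈ D0 ∩ Q := ⟨hall D0 hD0'.1, hαQ⟩
          rw [hD0'.2] at this; exact this
      have : α ∈ Di ∩ Qc := ⟨hαD, hαQc⟩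
      rw [h] at this; exact this
    · intro h
      ext α
      simp only [Set.mem_inter_iff, Set.mem_empty_iff_false, iff_false, not_and]
      intro hαD hαQc
      have hDidx : Di ∈ d.dxS Ds Q := by rw [hdx]; exact ⟨hDi, h⟩
      exact hαQc.1.2 ⟨Di, hDidx, hαD⟩
  -- dz(Q) = ∅
  have hdz : d.dzS Ds Q = ∅ := by
    ext Di
    simp only [DPI.dzS, Set.mem_diff, Set.mem_union, Set.mem_empty_iff_false, iff_false,
      not_and, not_not]
    intro hDi
    by_cases h : Di ∩ Q = ∅
    · left; rw [hdx]; exact ⟨hDi, h⟩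
    · right; rw [hdnx]; exact ⟨hDi, h⟩
  -- dx(Qc) = dx(Q), dnx(Qc) = dnx(Q)
  have hdxQc : d.dxS Ds Qc = d.dxS Ds Q := by
    rw [d.dx_char hDs hQcK, hdx]
    ext Di
    simp only [Set.mem_setOf_eq]
    exact ⟨fun ⟨h1, h2⟩ => ⟨h1, (key Di h1).1 h2⟩, fun ⟨h1, h2⟩ => ⟨h1, (key Di h1).2 h2⟩⟩
  have hdnxQc : d.dnxS Ds Qc = d.dnxS Ds Q := by
    rw [d.dnx_char hDs hQcK, hdnx]
    ext Di
    simp only [Set.mem_setOf_eq]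
    exact ⟨fun ⟨h1, h2⟩ => ⟨h1, fun h => h2 ((key Di h1).2 h)⟩,
      fun ⟨h1, h2⟩ => ⟨h1, fun h => h2 ((key Di h1).1 h)⟩⟩
  have hunion : d.dxS Ds Q ∪ d.dnxS Ds Q = Ds := by
    ext Di
    simp only [Set.mem_union, hdx, hdnx, Set.mem_setOf_eq]
    constructor
    · rintro (h | h) <;> exact h.1
    · intro h; by_cases hc : Di ∩ Q = ∅
      · exact Or.inl ⟨h, hc⟩
      · exact Or.inr ⟨h, hc⟩
  have hinter : d.dxS Ds Q ∩ d.dnxS Ds Q = ∅ := by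
    ext Di
    simp only [Set.mem_inter_iff, hdx, hdnx, Set.mem_setOf_eq, Set.mem_empty_iff_false,
      iff_false, not_and]
    tauto
  obtain ⟨D1, hD1⟩ := hdnxne
  have hD1' : D1 ∈ Ds ∧ D1 ∩ Q ≠ ∅ := by rw [hdnx] at hD1; exact hD1
  have hQcne : Qc.Nonempty := by
    obtain ⟨α, hαD, hαQ⟩ := Set.nonempty_iff_ne_empty.mpr hD1'.2
    refine ⟨α, ⟨hQK hαQ, ?_⟩, ⟨D1, hD1'.1, hαD⟩, ?_⟩
    · rintro ⟨Dj, hDj, hαDj⟩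
      rw [hdx] at hDj
      have : α ∈ Dj ∩ Q := ⟨hαDj, hαQ⟩
      rw [hDj.2] at this; exact this
    · intro hall
      have : α ∈ D0 ∩ Q := ⟨hall D0 hD0'.1, hαQ⟩
      rw [hD0'.2] at this; exact this
  refine ⟨hdz, hunion, hinter, ⟨D0, hD0⟩, ?_, hQcne, hdxQc, hdnxQc, ?_⟩
  · constructor
    · intro Di hDi; rw [hdx] at hDi; exact hDi.1
    · intro hsub
      have := hsub hD1'.1
      rw [hdx] at this
      exact hD1'.2 this.2
  · unfold DPI.dzS
    rw [hdxQc, hdnxQc, hunion]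
    simp

end KBDDiag
end
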